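/- If e^{tA} is a C₀-semigroup on a complex Banach space B that extends to an analytic semigroup e^{zA} defined on a sector S_θ = {z ∈ ℂ : z ≠ 0, |arg z| < θ} with θ > 0, then for every z₀ ∈ S_θ the operator e^{z₀A} is injective. -/

import Mathlib

open Complex Filter Topology

/-- An analytic semigroup on a sector `S_θ` consists of injective operators. -/
theorem analytic_semigroup_injective
    {B : Type*} [NormedAddCommGroup B] [NormedSpace ℂ B] [CompleteSpace B]
    (θ : ℝ) (hθ : 0 < θ) (hθ' : θ ≤ Real.pi / 2)
    (E : ℂ → B →L[ℂ] B)
    (hE0 : E 0 = ContinuousLinearMap.id ℂ B)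
    (hsg : ∀ z w : ℂ, (z = 0 ∨ (z ≠ 0 ∧ |z.arg| < θ)) → (w = 0 ∨ (w ≠ 0 ∧ |w.arg| < θ)) →
      E (z + w) = (E z).comp (E w))
    (hanal : DifferentiableOn ℂ E {z : ℂ | z ≠ 0 ∧ |z.arg| < θ})
    (hcont : ∀ x : B, Tendsto (fun t : ℝ => E (t : ℂ) x) (𝓝[>] (0 : ℝ)) (𝓝 x)) :
    ∀ z₀ : ℂ, z₀ ≠ 0 → |z₀.arg| < θ → Function.Injective (E z₀) := by
  intro z₀ hz₀ harg
  have hπ : θ ≤ Real.pi := hθ'.trans (by linarith [Real.pi_pos])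
  set c : ℝ := Real.cos θ with hc
  have hc0 : 0 ≤ c := Real.cos_nonneg_of_mem_Icc ⟨by linarith [Real.pi_pos], hθ'⟩
  have hc1 : c < 1 := by
    have := Real.cos_lt_cos_of_nonneg_of_le_pi (le_refl 0) hπ hθ
    simpa using this
  set S : Set ℂ := {z : ℂ | z ≠ 0 ∧ |z.arg| < θ} with hSdef
  set T : Set ℂ := {z : ℂ | ‖z‖ * c < z.re} with hTdef
  have hST : S = T := by
    ext z
    simp only [hSdef, hTdef, Set.mem_setOf_eq]
    constructor
    · rintro ⟨hz, hzarg⟩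
      have hre : z.re = ‖z‖ * Real.cos z.arg := by
        rw [Complex.cos_arg hz]
        have habs : ‖z‖ ≠ 0 := norm_ne_zero_iff.mpr hz
        field_simp
      have hcc : c < Real.cos z.arg := by
        rw [← Real.cos_abs z.arg]
        exact Real.cos_lt_cos_of_nonneg_of_le_pi (abs_nonneg _) hπ hzarg
      have hzn : 0 < ‖z‖ := norm_pos_iff.mpr hz
      rw [hre]
      exact (mul_lt_mul_iff_right₀ hzn).mpr hcc
    · intro h
      have hz : z ≠ 0 := by
        rintro rfl
        simp at h
      refine ⟨hz, ?_⟩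
      by_contra hcon
      push_neg at hcon
      have hle : Real.cos z.arg ≤ c := by
        rw [← Real.cos_abs z.arg]
        exact Real.cos_le_cos_of_nonneg_of_le_pi hθ.le (Complex.abs_arg_le_pi z) hcon
      have hre : z.re = ‖z‖ * Real.cos z.arg := by
        rw [Complex.cos_arg hz]
        have habs : ‖z‖ ≠ 0 := norm_ne_zero_iff.mpr hz
        field_simp
      rw [hre] at h
      have : ‖z‖ * Real.cos z.arg ≤ ‖z‖ * c :=
        mul_le_mul_of_nonneg_left hle (norm_nonneg _)
      linarith
  have hT_open : IsOpen T :=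
    isOpen_lt (continuous_norm.mul continuous_const) Complex.continuous_re
  have hT_conv : Convex ℝ T := by
    intro x hx y hy a b ha hb hab
    simp only [hTdef, Set.mem_setOf_eq] at hx hy ⊢
    have hnorm : ‖a • x + b • y‖ * c ≤ (a * ‖x‖ + b * ‖y‖) * c := by
      apply mul_le_mul_of_nonneg_right _ hc0
      calc ‖a • x + b • y‖ ≤ ‖a • x‖ + ‖b • y‖ := norm_add_le _ _
        _ = a * ‖x‖ + b * ‖y‖ := by
            rw [norm_smul, norm_smul, Real.norm_eq_abs, Real.norm_eq_abs,
              _root_.abs_of_nonneg ha, _root_.abs_of_nonneg hb]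
    have hre : (a • x + b • y).re = a * x.re + b * y.re := by
      simp [Complex.add_re, Complex.smul_re]
    rw [hre]
    refine hnorm.trans_lt ?_
    rcases ha.eq_or_lt with rfl | ha'
    · have hb1 : b = 1 := by linarith
      simp only [zero_mul, zero_add, hb1, one_mul] at *
      exact hy
    · have h1 : a * (‖x‖ * c) < a * x.re := (mul_lt_mul_iff_right₀ ha').mpr hx
      have h2 : b * (‖y‖ * c) ≤ b * y.re :=
        mul_le_mul_of_nonneg_left hy.le hb
      calc (a * ‖x‖ + b * ‖y‖) * c = a * (‖x‖ * c) + b * (‖y‖ * c) := by ring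
        _ < a * x.re + b * y.re := add_lt_add_of_lt_of_le h1 h2
  have hadd : ∀ z ∈ T, ∀ w ∈ T, z + w ∈ T := by
    intro z hz w hw
    simp only [hTdef, Set.mem_setOf_eq] at hz hw ⊢
    have : ‖z + w‖ * c ≤ (‖z‖ + ‖w‖) * c :=
      mul_le_mul_of_nonneg_right (norm_add_le _ _) hc0
    have hre : (z + w).re = z.re + w.re := Complex.add_re z w
    nlinarith
  have hpos : ∀ t : ℝ, 0 < t → (t : ℂ) ∈ T := by
    intro t ht
    simp only [hTdef, Set.mem_setOf_eq, Complex.norm_real, Real.norm_eq_abs,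
      abs_of_pos ht, Complex.ofReal_re]
    nlinarith
  have hz₀T : z₀ ∈ T := by rw [← hST]; exact ⟨hz₀, harg⟩
  -- key: kernel of E z₀ is trivial
  have key : ∀ x : B, E z₀ x = 0 → x = 0 := by
    intro x hx
    set F : ℂ → B := fun z => E z x with hFdef
    have hF : DifferentiableOn ℂ F T := by
      rw [← hST]
      exact hanal.clm_apply (differentiableOn_const x)
    have hFanal : AnalyticOnNhd ℂ F T := hF.analyticOnNhd hT_open
    have hpT : z₀ + z₀ ∈ T := hadd z₀ hz₀T z₀ hz₀T
    -- F vanishes on z₀ + T, an open neighborhood of z₀ + z₀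
    have hev : F =ᶠ[𝓝 (z₀ + z₀)] 0 := by
      have hVopen : IsOpen ((fun z => z - z₀) ⁻¹' T) :=
        hT_open.preimage (continuous_id.sub continuous_const)
      have hmem : z₀ + z₀ ∈ (fun z => z - z₀) ⁻¹' T := by
        simp only [Set.mem_preimage, add_sub_cancel_right]
        exact hz₀T
      filter_upwards [hVopen.mem_nhds hmem] with z hzV
      have hw : z - z₀ ∈ S := by rw [hST]; exact hzV
      have := hsg (z - z₀) z₀ (Or.inr hw) (Or.inr ⟨hz₀, harg⟩)
      rw [sub_add_cancel] at this
      simp only [hFdef, this, ContinuousLinearMap.coe_comp', Function.comp_apply, hx,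
        map_zero, Pi.zero_apply]
    have hzero : Set.EqOn F 0 T :=
      hFanal.eqOn_zero_of_preconnected_of_eventuallyEq_zero hT_conv.isPreconnected hpT hev
    -- F t = 0 for t > 0, and F t → x as t → 0⁺
    have h0 : Tendsto (fun t : ℝ => E (t : ℂ) x) (𝓝[>] (0 : ℝ)) (𝓝 (0 : B)) := by
      have : ∀ᶠ t : ℝ in 𝓝[>] (0 : ℝ), E (t : ℂ) x = 0 := by
        filter_upwards [self_mem_nhdsWithin] with t ht
        exact hzero (hpos t ht)
      exact Tendsto.congr' (this.mono fun t h => h.symm) tendsto_const_nhds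
    exact tendsto_nhds_unique (hcont x) h0
  intro u v huv
  have : E z₀ (u - v) = 0 := by rw [map_sub, huv, sub_self]
  have := key (u - v) this
  exact sub_eq_zero.mp this
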